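/- Let (W, S) be a Coxeter system with length function ℓ, and let σ be a group automorphism of W with σ(S) = S. If w ∈ W is σ-straight and w′ = x w σ(x)⁻¹ is a σ-conjugate of w with ℓ(w′) = ℓ(w), then w′ is also σ-straight. -/

import Mathlib

/-- For an automorphism `σ` of a group `W` and `w ∈ W`, the twisted product
`g_m(w) = w · σ(w) · σ²(w) ⋯ σ^{m−1}(w)`. -/
def twistProd {W : Type*} [Group W] (σ : W → W) (w : W) (m : ℕ) : W :=
  ((List.range m).map fun i => σ^[i] w).prod

section Aux

variable {B W : Type*} [Group W] {M : CoxeterMatrix B} (cs : CoxeterSystem M W)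

lemma aux_iter_mul (σ : W ≃* W) (m : ℕ) (a b : W) :
    (⇑σ)^[m] (a * b) = (⇑σ)^[m] a * (⇑σ)^[m] b := by
  induction m with
  | zero => simp
  | succ n ih => simp [Function.iterate_succ', Function.comp, ih]

lemma aux_iter_inv (σ : W ≃* W) (m : ℕ) (a : W) :
    (⇑σ)^[m] a⁻¹ = ((⇑σ)^[m] a)⁻¹ := by
  induction m with
  | zero => simp
  | succ n ih => simp [Function.iterate_succ', Function.comp, ih]

lemma aux_length_sigma (σ : W ≃* W)
    (hσS : ⇑σ '' Set.range cs.simple = Set.range cs.simple) (v : W) :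
    cs.length (σ v) = cs.length v := by
  have key : ∀ (τ : W ≃* W), ⇑τ '' Set.range cs.simple = Set.range cs.simple →
      ∀ u : W, cs.length (τ u) ≤ cs.length u := by
    intro τ hτ u
    obtain ⟨ω, hlen, hprod⟩ := cs.exists_reduced_word u
    have hstep : ∀ i : B, ∃ b : B, τ (cs.simple i) = cs.simple b := by
      intro i
      have : τ (cs.simple i) ∈ ⇑τ '' Set.range cs.simple :=
        Set.mem_image_of_mem _ ⟨i, rfl⟩
      rw [hτ] at this
      obtain ⟨b, hb⟩ := this
      exact ⟨b, hb.symm⟩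
    set f : B → B := fun i => Classical.choose (hstep i) with hf
    have hfs : ∀ i, cs.simple (f i) = τ (cs.simple i) := fun i =>
      (Classical.choose_spec (hstep i)).symm
    have hτu : τ u = cs.wordProd (ω.map f) := by
      rw [hprod, CoxeterSystem.wordProd, CoxeterSystem.wordProd,
        map_list_prod τ]
      simp only [List.map_map]
      congr 1
      apply List.map_congr_left
      intro i _
      simp [Function.comp, hfs]
    calc cs.length (τ u) ≤ (ω.map f).length := hτu ▸ cs.length_wordProd_le _
      _ = cs.length u := by rw [List.length_map, hprod, hlen]
  have h1 := key σ hσS v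
  have hσS' : ⇑σ.symm '' Set.range cs.simple = Set.range cs.simple := by
    conv_lhs => rw [← hσS]
    rw [Set.image_image]
    simp
  have h2 := key σ.symm hσS' (σ v)
  simp only [MulEquiv.symm_apply_apply] at h2
  omega

lemma aux_length_iter (σ : W ≃* W)
    (hσS : ⇑σ '' Set.range cs.simple = Set.range cs.simple) (m : ℕ) (v : W) :
    cs.length ((⇑σ)^[m] v) = cs.length v := by
  induction m with
  | zero => simp
  | succ n ih =>
    rw [Function.iterate_succ', Function.comp_apply, aux_length_sigma cs σ hσS, ih]

lemma twistProd_succ (σ : W → W) (w : W) (m : ℕ) :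
    twistProd σ w (m + 1) = twistProd σ w m * σ^[m] w := by
  simp [twistProd, List.range_succ]

lemma twistProd_conj (σ : W ≃* W) (w x : W) (m : ℕ) :
    twistProd (⇑σ) (x * w * (σ x)⁻¹) m
      = x * twistProd (⇑σ) w m * ((⇑σ)^[m] x)⁻¹ := by
  induction m with
  | zero => simp [twistProd]
  | succ n ih =>
    rw [twistProd_succ, twistProd_succ, ih]
    have : (⇑σ)^[n] (x * w * (σ x)⁻¹)
        = (⇑σ)^[n] x * (⇑σ)^[n] w * ((⇑σ)^[n+1] x)⁻¹ := by
      rw [aux_iter_mul, aux_iter_mul, aux_iter_inv]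
      congr 2
    rw [this]
    group

lemma twistProd_add (σ : W ≃* W) (w : W) (m n : ℕ) :
    twistProd (⇑σ) w (m + n) = twistProd (⇑σ) w m * (⇑σ)^[m] (twistProd (⇑σ) w n) := by
  induction n with
  | zero => simp [twistProd]
  | succ k ih =>
    rw [← Nat.add_assoc, twistProd_succ, twistProd_succ, ih, mul_assoc,
      aux_iter_mul]
    congr 2
    rw [← Function.iterate_add_apply]

lemma twistProd_le (σ : W ≃* W)
    (hσS : ⇑σ '' Set.range cs.simple = Set.range cs.simple) (w : W) (m : ℕ) :
    cs.length (twistProd (⇑σ) w m) ≤ m * cs.length w := by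
  induction m with
  | zero => simp [twistProd]
  | succ n ih =>
    rw [twistProd_succ]
    calc cs.length (twistProd (⇑σ) w n * (⇑σ)^[n] w)
        ≤ cs.length (twistProd (⇑σ) w n) + cs.length ((⇑σ)^[n] w) :=
          cs.length_mul_le _ _
      _ ≤ n * cs.length w + cs.length w := by
          rw [aux_length_iter cs σ hσS]; omega
      _ = (n + 1) * cs.length w := by ring

lemma twistProd_mul_le (σ : W ≃* W)
    (hσS : ⇑σ '' Set.range cs.simple = Set.range cs.simple) (w : W) (m k : ℕ) :
    cs.length (twistProd (⇑σ) w (m * k)) ≤ k * cs.length (twistProd (⇑σ) w m) := by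
  induction k with
  | zero => simp [twistProd]
  | succ j ih =>
    have : m * (j + 1) = m * j + m := by ring
    rw [this, twistProd_add]
    calc cs.length (twistProd (⇑σ) w (m * j) * (⇑σ)^[m*j] (twistProd (⇑σ) w m))
        ≤ cs.length (twistProd (⇑σ) w (m * j))
            + cs.length ((⇑σ)^[m*j] (twistProd (⇑σ) w m)) := cs.length_mul_le _ _
      _ ≤ j * cs.length (twistProd (⇑σ) w m) + cs.length (twistProd (⇑σ) w m) := by
          rw [aux_length_iter cs σ hσS]; omega
      _ = (j + 1) * cs.length (twistProd (⇑σ) w m) := by ring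

end Aux

/-- If `(W, S)` is a Coxeter system, `σ` an automorphism of `W` with `σ(S) = S`,
`w` is `σ`-straight and `w' = x w σ(x)⁻¹` is a `σ`-conjugate of `w` with
`ℓ(w') = ℓ(w)`, then `w'` is also `σ`-straight. -/
theorem straight_of_conjugate_same_length {B W : Type*} [Group W] {M : CoxeterMatrix B}
    (cs : CoxeterSystem M W) (σ : W ≃* W)
    (hσS : ⇑σ '' Set.range cs.simple = Set.range cs.simple)
    (w : W)
    (hw : ∀ m : ℕ, 1 ≤ m → cs.length (twistProd σ w m) = m * cs.length w)
    (x : W) (w' : W) (hw' : w' = x * w * (σ x)⁻¹)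
    (hlen : cs.length w' = cs.length w) :
    ∀ m : ℕ, 1 ≤ m → cs.length (twistProd σ w' m) = m * cs.length w' := by
  intro m hm
  subst hw'
  -- upper bound
  have hupper : cs.length (twistProd (⇑σ) (x * w * (σ x)⁻¹) m)
      ≤ m * cs.length (x * w * (σ x)⁻¹) := twistProd_le cs σ hσS _ m
  rw [hlen] at hupper ⊢
  -- lower bound for arbitrary multiples
  have hlow : ∀ k : ℕ, 1 ≤ k →
      m * k * cs.length w
        ≤ cs.length (twistProd (⇑σ) (x * w * (σ x)⁻¹) (m * k)) + 2 * cs.length x := by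
    intro k hk
    have hconj := twistProd_conj σ w x (m * k)
    have heq : twistProd (⇑σ) w (m * k)
        = x⁻¹ * (twistProd (⇑σ) (x * w * (σ x)⁻¹) (m * k)) * (⇑σ)^[m*k] x := by
      rw [hconj]; group
    have hmk : 1 ≤ m * k := Nat.one_le_iff_ne_zero.mpr (by positivity)
    have h1 := hw (m * k) hmk
    rw [heq] at h1
    have h2 := cs.length_mul_le (x⁻¹ * twistProd (⇑σ) (x * w * (σ x)⁻¹) (m * k))
      ((⇑σ)^[m*k] x)
    have h3 := cs.length_mul_le x⁻¹ (twistProd (⇑σ) (x * w * (σ x)⁻¹) (m * k))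
    rw [aux_length_iter cs σ hσS] at h2
    rw [cs.length_inv] at h3
    omega
  by_contra hne
  have hlt : cs.length (twistProd (⇑σ) (x * w * (σ x)⁻¹) m) < m * cs.length w := by
    omega
  set k := 2 * cs.length x + 1 with hk
  have h4 := twistProd_mul_le cs σ hσS (x * w * (σ x)⁻¹) m k
  have h5 := hlow k (by omega)
  have h6 : k * cs.length (twistProd (⇑σ) (x * w * (σ x)⁻¹) m)
      ≤ k * (m * cs.length w - 1) := Nat.mul_le_mul_left _ (by omega)
  have h7 : 1 ≤ m * cs.length w := by omega
  have : m * k * cs.length w ≤ k * (m * cs.length w - 1) + 2 * cs.length x := by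
    omega
  have hexp : m * k * cs.length w = k * (m * cs.length w) := by ring
  rw [hexp] at this
  have : k * (m * cs.length w) ≤ k * (m * cs.length w) - k + 2 * cs.length x := by
    rw [Nat.mul_sub_one] at this
    -- k * (m*ℓw - 1) = k*(m*ℓw) - k
    have : k * (m * cs.length w - 1) = k * (m * cs.length w) - k := by
      rw [Nat.mul_sub]
      omega
    omega
  have hkle : k ≤ 2 * cs.length x := by
    have hkm : k ≤ k * (m * cs.length w) := Nat.le_mul_of_pos_right k (by omega)
    omega
  omega
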